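/- arXiv:2108.05546 — 4 statements merged into one kernel-verified Lean document; each statement's English description precedes it below -/
import Mathlib

section
/- Let V be a finite-dimensional real vector space and let R be a finite set of nonzero vectors in V. Then R has exactly one independent decomposition that admits no proper independent refinement; i.e., there exists an independent decomposition F of R such that no independent decomposition properly refines F, and any two independent decompositions of R with this property are equal. This F is called the finest independent decomposition of R. -/
open Module Submodule Finset

set_option linter.unusedSectionVars false

/-- A decomposition of a finite set `R` of vectors: a collection of nonempty,
pairwise disjoint subsets of `R` whose union is `R`. -/
def IsDecompositionOf {V : Type*} [DecidableEq V] (R : Finset V)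
    (D : Finset (Finset V)) : Prop :=
  (∀ P ∈ D, P.Nonempty) ∧ (D : Set (Finset V)).PairwiseDisjoint id ∧ D.sup id = R

/-- A decomposition is independent if the span of `R` is the internal direct sum of the
spans of the blocks. -/
def IsIndependentDecompositionOf {V : Type*} [DecidableEq V] [AddCommGroup V] [Module ℝ V]
    (R : Finset V) (D : Finset (Finset V)) : Prop :=
  IsDecompositionOf R D ∧
    iSupIndep (fun P : {P // P ∈ D} => Submodule.span ℝ ((P : Finset V) : Set V)) ∧
    (⨆ P : {P // P ∈ D}, Submodule.span ℝ ((P : Finset V) : Set V)) =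
      Submodule.span ℝ (R : Set V)

/-- `D` is a refinement of `P` (`P` a coarsening of `D`) if every block of `D` is contained
in some block of `P`. -/
def IsRefinementOf {V : Type*} (D P : Finset (Finset V)) : Prop :=
  ∀ Q ∈ D, ∃ B ∈ P, Q ⊆ B

section Aux

variable {V : Type*} [AddCommGroup V] [Module ℝ V] [FiniteDimensional ℝ V]

/-- finrank of a finite sup is at most the sum of the finranks. -/
lemma aux_finrank_finsetSup_le {ι : Type*} (s : Finset ι) (f : ι → Submodule ℝ V) :
    finrank ℝ (s.sup f : Submodule ℝ V) ≤ ∑ i ∈ s, finrank ℝ (f i) := by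
  classical
  induction s using Finset.cons_induction with
  | empty => simp
  | cons i s hi ih =>
    rw [Finset.sup_cons, Finset.sum_cons]
    exact (Submodule.finrank_add_le_finrank_add_finrank _ _).trans (Nat.add_le_add_left ih _)

/-- For a sup-independent family, finrank of the sup is the sum of the finranks. -/
lemma aux_finrank_finsetSup_eq {ι : Type*} {s : Finset ι} {f : ι → Submodule ℝ V}
    (h : s.SupIndep f) :
    finrank ℝ (s.sup f : Submodule ℝ V) = ∑ i ∈ s, finrank ℝ (f i) := by
  classical
  induction s using Finset.cons_induction with
  | empty => simp
  | cons i s hi ih =>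
    rw [Finset.sup_cons, Finset.sum_cons, ← ih (h.subset (Finset.subset_cons _))]
    have hd : Disjoint (f i) (s.sup f) := by
      have := (Finset.supIndep_iff_disjoint_erase.mp h) i (Finset.mem_cons_self i s)
      rwa [Finset.erase_cons] at this
    rw [← Submodule.finrank_sup_add_finrank_inf_eq, hd.eq_bot, finrank_bot, add_zero]

/-- Conversely, additivity of finrank implies sup-independence. -/
lemma aux_supIndep_of_finrank {ι : Type*} {s : Finset ι} {f : ι → Submodule ℝ V}
    (h : finrank ℝ (s.sup f : Submodule ℝ V) = ∑ i ∈ s, finrank ℝ (f i)) :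
    s.SupIndep f := by
  classical
  rw [Finset.supIndep_iff_disjoint_erase]
  intro i hi
  have hsup : s.sup f = f i ⊔ (s.erase i).sup f := by
    conv_lhs => rw [← Finset.insert_erase hi]
    rw [Finset.sup_insert]
  have hsum : ∑ j ∈ s, finrank ℝ (f j) = finrank ℝ (f i) + ∑ j ∈ s.erase i, finrank ℝ (f j) := by
    rw [← Finset.sum_erase_add _ _ hi, add_comm]
  have hb := aux_finrank_finsetSup_le (s.erase i) f
  have key := Submodule.finrank_sup_add_finrank_inf_eq (f i) ((s.erase i).sup f)
  rw [disjoint_iff, ← Submodule.finrank_eq_zero (R := ℝ)]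
  rw [hsup] at h
  omega

end Aux

section Aux2

variable {V : Type*} [DecidableEq V] [AddCommGroup V] [Module ℝ V] [FiniteDimensional ℝ V]

lemma aux_sup_span (D : Finset (Finset V)) :
    D.sup (fun P => Submodule.span ℝ (P : Set V)) =
      Submodule.span ℝ ((D.sup id : Finset V) : Set V) := by
  apply le_antisymm
  · exact Finset.sup_le fun P hP =>
      Submodule.span_mono (Finset.coe_subset.mpr (Finset.le_sup (f := id) hP))
  · rw [Submodule.span_le]
    intro x hx
    rw [Finset.mem_coe, Finset.mem_sup] at hx
    obtain ⟨P, hP, hxP⟩ := hx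
    exact (Finset.le_sup (f := fun P : Finset V => Submodule.span ℝ (P : Set V)) hP)
      (Submodule.subset_span hxP)

lemma aux_iSup_subtype (D : Finset (Finset V)) :
    (⨆ P : {P // P ∈ D}, Submodule.span ℝ ((P : Finset V) : Set V)) =
      D.sup (fun P => Submodule.span ℝ (P : Set V)) := by
  rw [Finset.sup_eq_iSup, iSup_subtype]

lemma aux_indep_iff {R : Finset V} {D : Finset (Finset V)} (hD : IsDecompositionOf R D) :
    IsIndependentDecompositionOf R D ↔
      ∑ P ∈ D, finrank ℝ (Submodule.span ℝ (P : Set V)) =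
        finrank ℝ (Submodule.span ℝ (R : Set V)) := by
  have hsup : D.sup (fun P => Submodule.span ℝ (P : Set V)) = Submodule.span ℝ (R : Set V) := by
    rw [aux_sup_span, hD.2.2]
  constructor
  · rintro ⟨-, hindep, -⟩
    have hsi : D.SupIndep (fun P => Submodule.span ℝ (P : Set V)) :=
      iSupIndep_comp_coe_iff_supIndep.mp hindep
    rw [← aux_finrank_finsetSup_eq hsi, hsup]
  · intro hsum
    refine ⟨hD, ?_, ?_⟩
    · exact iSupIndep_comp_coe_iff_supIndep.mpr (aux_supIndep_of_finrank (by rw [hsup, hsum]))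
    · rw [aux_iSup_subtype, hsup]



lemma aux_card_lt {R : Finset V} {D F : Finset (Finset V)}
    (hD : IsDecompositionOf R D) (hF : IsDecompositionOf R F)
    (href : IsRefinementOf D F) (hne : D ≠ F) : F.card < D.card := by
  classical
  have hFdisj : ∀ B ∈ F, ∀ B' ∈ F, ∀ x : V, x ∈ B → x ∈ B' → B = B' := by
    intro B hB B' hB' x hx hx'
    by_contra hne'
    exact (Finset.disjoint_left.mp (hF.2.1 hB hB' hne')) hx hx'
  set φ : Finset V → Finset V := fun Q => if h : ∃ B ∈ F, Q ⊆ B then h.choose else ∅ with hφ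
  have hφ1 : ∀ Q ∈ D, φ Q ∈ F ∧ Q ⊆ φ Q := by
    intro Q hQ
    have h := href Q hQ
    rw [hφ]
    simp only [dif_pos h]
    exact ⟨h.choose_spec.1, h.choose_spec.2⟩
  have hkey : ∀ B ∈ F, ∀ x ∈ B, ∃ Q ∈ D, x ∈ Q ∧ φ Q = B := by
    intro B hB x hx
    have hxR : x ∈ R := hF.2.2 ▸ Finset.mem_sup.mpr ⟨B, hB, hx⟩
    obtain ⟨Q, hQ, hxQ⟩ := Finset.mem_sup.mp (hD.2.2.symm ▸ hxR)
    obtain ⟨hφF, hsub⟩ := hφ1 Q hQ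
    exact ⟨Q, hQ, hxQ, hFdisj _ hφF _ hB x (hsub hxQ) hx⟩
  have hsurj : Set.SurjOn φ (D : Set (Finset V)) (F : Set (Finset V)) := by
    intro B hB
    obtain ⟨x, hx⟩ := hF.1 B hB
    obtain ⟨Q, hQ, _, hQB⟩ := hkey B hB x hx
    exact ⟨Q, hQ, hQB⟩
  have hle : F.card ≤ D.card := Finset.card_le_card_of_surjOn φ hsurj
  rcases lt_or_eq_of_le hle with h | h
  · exact h
  exfalso
  have hFsub : F ⊆ D.image φ := by
    intro B hB
    obtain ⟨Q, hQ, hQB⟩ := hsurj hB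
    exact Finset.mem_image.mpr ⟨Q, hQ, hQB⟩
  have hcardim : (D.image φ).card = D.card :=
    le_antisymm Finset.card_image_le (h ▸ Finset.card_le_card hFsub)
  have hinj : Set.InjOn φ (D : Set (Finset V)) := Finset.injOn_of_card_image_eq hcardim
  apply hne
  have hFD : F ⊆ D := by
    intro B hB
    obtain ⟨x, hx⟩ := hF.1 B hB
    obtain ⟨Q, hQ, hxQ, hQB⟩ := hkey B hB x hx
    have hBQ : B = Q := by
      apply Finset.Subset.antisymm
      · intro y hy
        obtain ⟨Q', hQ', hyQ', hQ'B⟩ := hkey B hB y hy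
        have : Q' = Q := hinj hQ' hQ (hQ'B.trans hQB.symm)
        exact this ▸ hyQ'
      · exact hQB ▸ (hφ1 Q hQ).2
    exact hBQ ▸ hQ
  exact (Finset.eq_of_subset_of_card_le hFD h.ge).symm

lemma aux_common {R : Finset V} {F F' : Finset (Finset V)}
    (hF : IsIndependentDecompositionOf R F) (hF' : IsIndependentDecompositionOf R F') :
    ∃ D : Finset (Finset V), IsIndependentDecompositionOf R D ∧
      IsRefinementOf D F ∧ IsRefinementOf D F' := by
  classical
  set D : Finset (Finset V) :=
    ((F ×ˢ F').filter (fun p => (p.1 ∩ p.2).Nonempty)).image (fun p => p.1 ∩ p.2) with hDdef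
  have hFdisj : ∀ B ∈ F, ∀ B' ∈ F, ∀ x : V, x ∈ B → x ∈ B' → B = B' := by
    intro B hB B' hB' x hx hx'
    by_contra hne'
    exact (Finset.disjoint_left.mp (hF.1.2.1 hB hB' hne')) hx hx'
  have hF'disj : ∀ C ∈ F', ∀ C' ∈ F', ∀ x : V, x ∈ C → x ∈ C' → C = C' := by
    intro C hC C' hC' x hx hx'
    by_contra hne'
    exact (Finset.disjoint_left.mp (hF'.1.2.1 hC hC' hne')) hx hx'
  have hmemD : ∀ Q, Q ∈ D ↔ ∃ B ∈ F, ∃ C ∈ F', Q = B ∩ C ∧ Q.Nonempty := by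
    intro Q
    rw [hDdef, Finset.mem_image]
    constructor
    · rintro ⟨p, hp, rfl⟩
      rw [Finset.mem_filter, Finset.mem_product] at hp
      exact ⟨p.1, hp.1.1, p.2, hp.1.2, rfl, hp.2⟩
    · rintro ⟨B, hB, C, hC, rfl, hne⟩
      exact ⟨(B, C), Finset.mem_filter.mpr ⟨Finset.mem_product.mpr ⟨hB, hC⟩, hne⟩, rfl⟩
  have hdecomp : IsDecompositionOf R D := by
    refine ⟨?_, ?_, ?_⟩
    · intro Q hQ
      obtain ⟨B, hB, C, hC, rfl, hne⟩ := (hmemD Q).mp hQ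
      exact hne
    · intro Q hQ Q' hQ' hne
      obtain ⟨B, hB, C, hC, rfl, -⟩ := (hmemD Q).mp hQ
      obtain ⟨B', hB', C', hC', rfl, -⟩ := (hmemD Q').mp hQ'
      show Disjoint (id (B ∩ C)) (id (B' ∩ C'))
      simp only [id_eq]
      rw [Finset.disjoint_left]
      intro x hx hx'
      rw [Finset.mem_inter] at hx hx'
      exact hne (by rw [hFdisj B hB B' hB' x hx.1 hx'.1, hF'disj C hC C' hC' x hx.2 hx'.2])
    · apply Finset.ext
      intro x
      rw [Finset.mem_sup]
      constructor
      · rintro ⟨Q, hQ, hx⟩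
        obtain ⟨B, hB, C, hC, rfl, -⟩ := (hmemD Q).mp hQ
        have hBR : B ⊆ R := hF.1.2.2 ▸ Finset.le_sup (f := id) hB
        exact hBR ((Finset.mem_inter.mp hx).1)
      · intro hx
        obtain ⟨B, hB, hxB⟩ := Finset.mem_sup.mp (hF.1.2.2.symm ▸ hx)
        obtain ⟨C, hC, hxC⟩ := Finset.mem_sup.mp (hF'.1.2.2.symm ▸ hx)
        have hxBC : x ∈ B ∩ C := Finset.mem_inter.mpr ⟨hxB, hxC⟩
        exact ⟨B ∩ C, (hmemD _).mpr ⟨B, hB, C, hC, rfl, ⟨x, hxBC⟩⟩, hxBC⟩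
  have hsum : ∑ Q ∈ D, finrank ℝ (Submodule.span ℝ (Q : Set V)) =
      finrank ℝ (Submodule.span ℝ (R : Set V)) := by
    have step1 : ∑ Q ∈ D, finrank ℝ (Submodule.span ℝ (Q : Set V)) =
        ∑ p ∈ (F ×ˢ F').filter (fun p => (p.1 ∩ p.2).Nonempty),
          finrank ℝ (Submodule.span ℝ ((p.1 ∩ p.2 : Finset V) : Set V)) := by
      rw [hDdef]
      apply Finset.sum_image
      intro p hp q hq heq
      rw [Finset.mem_coe, Finset.mem_filter, Finset.mem_product] at hp hq
      obtain ⟨x, hx⟩ := hp.2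
      have hx' : x ∈ q.1 ∩ q.2 := (show p.1 ∩ p.2 = q.1 ∩ q.2 from heq) ▸ hx
      rw [Finset.mem_inter] at hx hx'
      exact Prod.ext (hFdisj _ hp.1.1 _ hq.1.1 x hx.1 hx'.1)
        (hF'disj _ hp.1.2 _ hq.1.2 x hx.2 hx'.2)
    have step2 : ∑ p ∈ (F ×ˢ F').filter (fun p => (p.1 ∩ p.2).Nonempty),
          finrank ℝ (Submodule.span ℝ ((p.1 ∩ p.2 : Finset V) : Set V)) =
        ∑ p ∈ F ×ˢ F', finrank ℝ (Submodule.span ℝ ((p.1 ∩ p.2 : Finset V) : Set V)) := by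
      apply Finset.sum_filter_of_ne
      intro p _ hpne
      by_contra h
      rw [Finset.not_nonempty_iff_eq_empty] at h
      apply hpne
      rw [h]
      simp
    have step4 : ∀ C ∈ F', ∑ B ∈ F, finrank ℝ (Submodule.span ℝ ((B ∩ C : Finset V) : Set V)) =
        finrank ℝ (Submodule.span ℝ (C : Set V)) := by
      intro C hC
      have hFsi : F.SupIndep (fun B : Finset V => Submodule.span ℝ (B : Set V)) :=
        iSupIndep_comp_coe_iff_supIndep.mp hF.2.1
      have hsi' : F.SupIndep (fun B : Finset V => Submodule.span ℝ ((B ∩ C : Finset V) : Set V)) :=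
        Finset.SupIndep.antitone_fun
          (fun B _ => Submodule.span_mono (Finset.coe_subset.mpr Finset.inter_subset_left)) hFsi
      rw [← aux_finrank_finsetSup_eq hsi']
      have heq : F.sup (fun B : Finset V => Submodule.span ℝ ((B ∩ C : Finset V) : Set V)) =
          Submodule.span ℝ (C : Set V) := by
        apply le_antisymm
        · exact Finset.sup_le fun B hB =>
            Submodule.span_mono (Finset.coe_subset.mpr Finset.inter_subset_right)
        · rw [Submodule.span_le]
          intro x hx
          rw [Finset.mem_coe] at hx
          have hxR : x ∈ R := hF'.1.2.2 ▸ Finset.mem_sup.mpr ⟨C, hC, hx⟩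
          obtain ⟨B, hB, hxB⟩ := Finset.mem_sup.mp (hF.1.2.2.symm ▸ hxR)
          exact (Finset.le_sup
              (f := fun B : Finset V => Submodule.span ℝ ((B ∩ C : Finset V) : Set V)) hB)
            (Submodule.subset_span (Finset.mem_inter.mpr ⟨hxB, hx⟩))
      rw [heq]
    have step5 : ∑ C ∈ F', finrank ℝ (Submodule.span ℝ (C : Set V)) =
        finrank ℝ (Submodule.span ℝ (R : Set V)) := (aux_indep_iff hF'.1).mp hF'
    rw [step1, step2, Finset.sum_product, Finset.sum_comm, ← step5]
    exact Finset.sum_congr rfl step4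
  refine ⟨D, (aux_indep_iff hdecomp).mpr hsum, ?_, ?_⟩
  · intro Q hQ
    obtain ⟨B, hB, C, hC, rfl, -⟩ := (hmemD Q).mp hQ
    exact ⟨B, hB, Finset.inter_subset_left⟩
  · intro Q hQ
    obtain ⟨B, hB, C, hC, rfl, -⟩ := (hmemD Q).mp hQ
    exact ⟨C, hC, Finset.inter_subset_right⟩




end Aux2

/-- `R` has exactly one independent decomposition admitting no proper independent
refinement: the finest independent decomposition of `R`. -/
theorem existsUnique_finest_independent_decomposition
    {V : Type*} [DecidableEq V] [AddCommGroup V] [Module ℝ V] [FiniteDimensional ℝ V]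
    (R : Finset V) (hR : ∀ v ∈ R, v ≠ 0) :
    ∃! F : Finset (Finset V), IsIndependentDecompositionOf R F ∧
      ¬ ∃ D : Finset (Finset V), IsIndependentDecompositionOf R D ∧
        IsRefinementOf D F ∧ D ≠ F := by
  classical
  have htriv : ∃ D₀, IsIndependentDecompositionOf R D₀ := by
    by_cases hRe : R = ∅
    · subst hRe
      exact ⟨∅, (aux_indep_iff ⟨by simp, by simp, by simp⟩).mpr (by rw [Finset.sum_empty, Finset.coe_empty, Submodule.span_empty, finrank_bot])⟩
    · refine ⟨{R}, (aux_indep_iff ⟨?_, ?_, ?_⟩).mpr ?_⟩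
      · intro P hP
        rw [Finset.mem_singleton] at hP
        subst hP
        exact Finset.nonempty_iff_ne_empty.mpr hRe
      · simp
      · simp
      · simp
  obtain ⟨D₀, hD₀⟩ := htriv
  set T := R.powerset.powerset.filter (fun D => IsIndependentDecompositionOf R D) with hT
  have hmemT : ∀ D, IsIndependentDecompositionOf R D → D ∈ T := by
    intro D hD
    rw [hT, Finset.mem_filter, Finset.mem_powerset]
    refine ⟨fun Q hQ => Finset.mem_powerset.mpr ?_, hD⟩
    exact hD.1.2.2 ▸ Finset.le_sup (f := id) hQ
  obtain ⟨F, hFT, hFmax⟩ := Finset.exists_max_image T Finset.card ⟨D₀, hmemT _ hD₀⟩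
  have hFind : IsIndependentDecompositionOf R F := (Finset.mem_filter.mp hFT).2
  have hFprop : ¬ ∃ D : Finset (Finset V), IsIndependentDecompositionOf R D ∧
      IsRefinementOf D F ∧ D ≠ F := by
    rintro ⟨D, hDind, hDref, hDne⟩
    have hlt := aux_card_lt hDind.1 hFind.1 hDref hDne
    have hle := hFmax D (hmemT D hDind)
    omega
  refine ⟨F, ⟨hFind, hFprop⟩, ?_⟩
  rintro F' ⟨hF'ind, hF'prop⟩
  obtain ⟨D, hDind, hrefF', hrefF⟩ := aux_common hF'ind hFind
  have h1 : D = F' := by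
    by_contra h
    exact hF'prop ⟨D, hDind, hrefF', h⟩
  have h2 : D = F := by
    by_contra h
    exact hFprop ⟨D, hDind, hrefF, h⟩
  rw [← h1, h2]
end

section
/- Let V be a finite-dimensional real vector space, let R be a finite set of nonzero vectors in V, and let F be the finest independent decomposition of R (the unique independent decomposition of R admitting no proper independent refinement). Then a decomposition of R is independent if and only if it is a coarsening of F. -/
open Module Submodule

section RankLemmas

variable {ι : Type*} {K W : Type*} [Field K] [AddCommGroup W] [Module K W] [FiniteDimensional K W]

lemma finrank_finset_sup_le (s : Finset ι) (f : ι → Submodule K W) :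
    finrank K ↑(s.sup f) ≤ ∑ i ∈ s, finrank K ↑(f i) := by
  classical
  induction s using Finset.induction_on with
  | empty => simp
  | insert _ _ ha ih =>
    rename_i a s
    rw [Finset.sup_insert, Finset.sum_insert ha]
    exact le_trans (Submodule.finrank_add_le_finrank_add_finrank _ _) (by omega)

lemma finrank_finset_sup_eq_of_supIndep (s : Finset ι) (f : ι → Submodule K W)
    (h : s.SupIndep f) : finrank K ↑(s.sup f) = ∑ i ∈ s, finrank K ↑(f i) := by
  classical
  induction s using Finset.induction_on with
  | empty => simp
  | insert _ _ ha ih =>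
    rename_i a s
    have hd : Disjoint (f a) (s.sup f) :=
      h (Finset.subset_insert a s) (Finset.mem_insert_self a s) ha
    have key := Submodule.finrank_sup_add_finrank_inf_eq (f a) (s.sup f)
    rw [hd.eq_bot, finrank_bot] at key
    rw [Finset.sup_insert, Finset.sum_insert ha, ← ih (h.subset (Finset.subset_insert a s))]
    omega

lemma supIndep_of_finrank_eq (s : Finset ι) (f : ι → Submodule K W)
    (h : finrank K ↑(s.sup f) = ∑ i ∈ s, finrank K ↑(f i)) : s.SupIndep f := by
  classical
  rw [Finset.supIndep_iff_disjoint_erase]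
  intro i hi
  have h1 : s.sup f = f i ⊔ (s.erase i).sup f := by
    conv_lhs => rw [← Finset.insert_erase hi, Finset.sup_insert]
  have h2 : ∑ j ∈ s, finrank K ↑(f j) = finrank K ↑(f i) + ∑ j ∈ s.erase i, finrank K ↑(f j) :=
    (Finset.add_sum_erase _ _ hi).symm
  have h3 := finrank_finset_sup_le (s.erase i) f
  have h4 := Submodule.finrank_sup_add_finrank_inf_eq (f i) ((s.erase i).sup f)
  rw [← h1] at h4
  have h0 : finrank K ↑(f i ⊓ (s.erase i).sup f) = 0 := by omega
  rw [disjoint_iff]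
  exact Submodule.finrank_eq_zero.mp h0

end RankLemmas

section Decomp

variable {V : Type*} [DecidableEq V] [AddCommGroup V] [Module ℝ V] [FiniteDimensional ℝ V]

lemma span_finset_sup (D : Finset (Finset V)) :
    Submodule.span ℝ ((D.sup id : Finset V) : Set V)
      = D.sup (fun B => Submodule.span ℝ (B : Set V)) := by
  classical
  induction D using Finset.induction_on with
  | empty => simp
  | insert _ _ ha ih =>
    rename_i a s
    simp only [Finset.sup_insert, id_eq]
    rw [← ih, ← Submodule.span_union]
    congr 1
    simp [Finset.coe_union]

lemma indep_iff_rank (R : Finset V) (D : Finset (Finset V)) (hD : IsDecompositionOf R D) :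
    IsIndependentDecompositionOf R D ↔
      ∑ B ∈ D, finrank ℝ ↑(Submodule.span ℝ (B : Set V))
        = finrank ℝ ↑(Submodule.span ℝ (R : Set V)) := by
  have hsup : (⨆ P : {P // P ∈ D}, Submodule.span ℝ ((P : Finset V) : Set V)) =
      D.sup (fun B => Submodule.span ℝ (B : Set V)) := by
    rw [Finset.sup_eq_iSup, iSup_subtype']
  have hspan : D.sup (fun B => Submodule.span ℝ (B : Set V)) = Submodule.span ℝ (R : Set V) := by
    rw [← span_finset_sup, hD.2.2]
  constructor
  · rintro ⟨-, hind, -⟩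
    have hsi : D.SupIndep (fun B => Submodule.span ℝ (B : Set V)) :=
      iSupIndep_comp_coe_iff_supIndep.mp hind
    rw [← finrank_finset_sup_eq_of_supIndep D _ hsi, hspan]
  · intro h
    refine ⟨hD, ?_, by rw [hsup, hspan]⟩
    exact iSupIndep_comp_coe_iff_supIndep.mpr (supIndep_of_finrank_eq D _ (by rw [hspan, h]))

lemma rank_le_of_decomposition (R : Finset V) (D : Finset (Finset V))
    (hD : IsDecompositionOf R D) :
    finrank ℝ ↑(Submodule.span ℝ (R : Set V))
      ≤ ∑ B ∈ D, finrank ℝ ↑(Submodule.span ℝ (B : Set V)) := by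
  rw [← hD.2.2, span_finset_sup]
  exact finrank_finset_sup_le _ _

lemma coarsening_indep (R : Finset V) (F D : Finset (Finset V))
    (hF : IsIndependentDecompositionOf R F) (hD : IsDecompositionOf R D)
    (href : IsRefinementOf F D) : IsIndependentDecompositionOf R D := by
  classical
  rw [indep_iff_rank R D hD]
  have hFr := (indep_iff_rank R F hF.1).mp hF
  refine le_antisymm ?_ (rank_le_of_decomposition R D hD)
  have key : ∀ B ∈ D, finrank ℝ ↑(Submodule.span ℝ (B : Set V))
      ≤ ∑ P ∈ F.filter (· ⊆ B), finrank ℝ ↑(Submodule.span ℝ (P : Set V)) := by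
    intro B hB
    have hsub : B ⊆ (F.filter (· ⊆ B)).sup id := by
      intro v hv
      have hvR : v ∈ R := by
        rw [← hD.2.2]
        exact Finset.mem_sup.mpr ⟨B, hB, hv⟩
      rw [← hF.1.2.2] at hvR
      obtain ⟨P, hP, hvP⟩ := Finset.mem_sup.mp hvR
      obtain ⟨B', hB', hPB'⟩ := href P hP
      have hBB' : B = B' := by
        by_contra hne
        exact Finset.disjoint_left.mp (hD.2.1 hB hB' hne) hv (hPB' hvP)
      refine Finset.mem_sup.mpr ⟨P, Finset.mem_filter.mpr ⟨hP, ?_⟩, hvP⟩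
      rw [hBB']; exact hPB'
    calc finrank ℝ ↑(Submodule.span ℝ (B : Set V))
        ≤ finrank ℝ ↑(Submodule.span ℝ (((F.filter (· ⊆ B)).sup id : Finset V) : Set V)) :=
          Submodule.finrank_mono (Submodule.span_mono (by exact_mod_cast hsub))
      _ = finrank ℝ ↑((F.filter (· ⊆ B)).sup (fun P => Submodule.span ℝ (P : Set V))) := by
          rw [span_finset_sup]
      _ ≤ ∑ P ∈ F.filter (· ⊆ B), finrank ℝ ↑(Submodule.span ℝ (P : Set V)) :=
          finrank_finset_sup_le _ _
  have hdisj : (D : Set (Finset V)).PairwiseDisjoint (fun B => F.filter (· ⊆ B)) := by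
    intro B hB B' hB' hne
    simp only [Function.onFun]
    rw [Finset.disjoint_left]
    intro P hP hP'
    obtain ⟨hPF, hPB⟩ := Finset.mem_filter.mp hP
    obtain ⟨-, hPB'⟩ := Finset.mem_filter.mp hP'
    obtain ⟨v, hv⟩ := hF.1.1 P hPF
    exact Finset.disjoint_left.mp (hD.2.1 hB hB' hne) (hPB hv) (hPB' hv)
  calc ∑ B ∈ D, finrank ℝ ↑(Submodule.span ℝ (B : Set V))
      ≤ ∑ B ∈ D, ∑ P ∈ F.filter (· ⊆ B), finrank ℝ ↑(Submodule.span ℝ (P : Set V)) :=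
        Finset.sum_le_sum key
    _ = ∑ P ∈ D.biUnion (fun B => F.filter (· ⊆ B)),
          finrank ℝ ↑(Submodule.span ℝ (P : Set V)) := (Finset.sum_biUnion hdisj).symm
    _ ≤ ∑ P ∈ F, finrank ℝ ↑(Submodule.span ℝ (P : Set V)) := by
        refine Finset.sum_le_sum_of_subset ?_
        intro P hP
        obtain ⟨B, -, hPf⟩ := Finset.mem_biUnion.mp hP
        exact (Finset.mem_filter.mp hPf).1
    _ = _ := hFr

end Decomp

lemma sum_image_le_nat {α β : Type*} [DecidableEq β] (s : Finset α) (f : α → β) (g : β → ℕ) :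
    ∑ b ∈ s.image f, g b ≤ ∑ a ∈ s, g (f a) := by
  classical
  induction s using Finset.induction_on with
  | empty => simp
  | insert _ _ ha ih =>
    rename_i a s
    rw [Finset.image_insert, Finset.sum_insert ha]
    by_cases h : f a ∈ s.image f
    · rw [Finset.insert_eq_self.mpr h]; omega
    · rw [Finset.sum_insert h]; omega

section Forward

variable {V : Type*} [DecidableEq V] [AddCommGroup V] [Module ℝ V] [FiniteDimensional ℝ V]

lemma refines_of_indep (R : Finset V) (F D : Finset (Finset V))
    (hF : IsIndependentDecompositionOf R F)
    (hFinest : ¬ ∃ C : Finset (Finset V), IsIndependentDecompositionOf R C ∧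
      IsRefinementOf C F ∧ C ≠ F)
    (hD : IsIndependentDecompositionOf R D) : IsRefinementOf F D := by
  classical
  set C : Finset (Finset V) :=
    ((F ×ˢ D).image fun q => q.1 ∩ q.2).filter (fun X => X.Nonempty) with hCdef
  have memC : ∀ X : Finset V,
      X ∈ C ↔ (∃ P ∈ F, ∃ B ∈ D, P ∩ B = X) ∧ X.Nonempty := by
    intro X
    rw [hCdef, Finset.mem_filter, Finset.mem_image]
    constructor
    · rintro ⟨⟨⟨P, B⟩, hq, rfl⟩, hne⟩
      obtain ⟨hP, hB⟩ := Finset.mem_product.mp hq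
      exact ⟨⟨P, hP, B, hB, rfl⟩, hne⟩
    · rintro ⟨⟨P, hP, B, hB, rfl⟩, hne⟩
      exact ⟨⟨⟨P, B⟩, Finset.mem_product.mpr ⟨hP, hB⟩, rfl⟩, hne⟩
  -- C is a decomposition of R
  have hCdec : IsDecompositionOf R C := by
    refine ⟨fun X hX => ((memC X).mp hX).2, ?_, ?_⟩
    · intro X hX Y hY hne
      obtain ⟨⟨P₁, hP₁, B₁, hB₁, hX'⟩, -⟩ := (memC X).mp hX
      obtain ⟨⟨P₂, hP₂, B₂, hB₂, hY'⟩, -⟩ := (memC Y).mp hY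
      simp only [Function.onFun, id_eq]
      rw [Finset.disjoint_left]
      intro v hvX hvY
      apply hne
      rw [← hX'] at hvX; rw [← hY'] at hvY
      have hP : P₁ = P₂ := by
        by_contra h
        exact Finset.disjoint_left.mp (hF.1.2.1 hP₁ hP₂ h)
          (Finset.mem_inter.mp hvX).1 (Finset.mem_inter.mp hvY).1
      have hB : B₁ = B₂ := by
        by_contra h
        exact Finset.disjoint_left.mp (hD.1.2.1 hB₁ hB₂ h)
          (Finset.mem_inter.mp hvX).2 (Finset.mem_inter.mp hvY).2
      rw [← hX', ← hY', hP, hB]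
    · apply Finset.ext
      intro v
      rw [Finset.mem_sup]
      constructor
      · rintro ⟨X, hX, hvX⟩
        obtain ⟨⟨P, hP, B, hB, hX'⟩, -⟩ := (memC X).mp hX
        rw [← hF.1.2.2]
        exact Finset.mem_sup.mpr ⟨P, hP, (Finset.mem_inter.mp (hX' ▸ hvX)).1⟩
      · intro hvR
        obtain ⟨P, hP, hvP⟩ := Finset.mem_sup.mp (hF.1.2.2 ▸ hvR)
        obtain ⟨B, hB, hvB⟩ := Finset.mem_sup.mp (hD.1.2.2 ▸ hvR)
        have hv : v ∈ P ∩ B := Finset.mem_inter.mpr ⟨hvP, hvB⟩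
        exact ⟨P ∩ B, (memC _).mpr ⟨⟨P, hP, B, hB, rfl⟩, ⟨v, hv⟩⟩, hv⟩
  -- rank bound
  have hDsi : D.SupIndep (fun B => Submodule.span ℝ (B : Set V)) :=
    iSupIndep_comp_coe_iff_supIndep.mp hD.2.1
  have perP : ∀ P ∈ F, ∑ B ∈ D, finrank ℝ ↑(Submodule.span ℝ ((P ∩ B : Finset V) : Set V))
      ≤ finrank ℝ ↑(Submodule.span ℝ (P : Set V)) := by
    intro P hP
    have hsi : D.SupIndep (fun B => Submodule.span ℝ ((P ∩ B : Finset V) : Set V)) := by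
      intro t ht i hi hit
      refine (hDsi ht hi hit).mono
        (Submodule.span_mono (Finset.coe_subset.mpr Finset.inter_subset_right))
        (Finset.sup_mono_fun fun j hj =>
          Submodule.span_mono (Finset.coe_subset.mpr Finset.inter_subset_right))
    rw [← finrank_finset_sup_eq_of_supIndep D _ hsi]
    exact Submodule.finrank_mono (Finset.sup_le fun B hB =>
      Submodule.span_mono (Finset.coe_subset.mpr Finset.inter_subset_left))
  have htotal : ∑ X ∈ C, finrank ℝ ↑(Submodule.span ℝ (X : Set V))
      ≤ finrank ℝ ↑(Submodule.span ℝ (R : Set V)) := by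
    calc ∑ X ∈ C, finrank ℝ ↑(Submodule.span ℝ (X : Set V))
        ≤ ∑ X ∈ ((F ×ˢ D).image fun q : Finset V × Finset V => q.1 ∩ q.2),
            finrank ℝ ↑(Submodule.span ℝ (X : Set V)) :=
          Finset.sum_le_sum_of_subset (Finset.filter_subset _ _)
      _ ≤ ∑ q ∈ F ×ˢ D, finrank ℝ ↑(Submodule.span ℝ ((q.1 ∩ q.2 : Finset V) : Set V)) :=
          sum_image_le_nat _ _ _
      _ = ∑ P ∈ F, ∑ B ∈ D, finrank ℝ ↑(Submodule.span ℝ ((P ∩ B : Finset V) : Set V)) := by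
          rw [Finset.sum_product]
      _ ≤ ∑ P ∈ F, finrank ℝ ↑(Submodule.span ℝ (P : Set V)) := Finset.sum_le_sum perP
      _ = finrank ℝ ↑(Submodule.span ℝ (R : Set V)) := (indep_iff_rank R F hF.1).mp hF
  have hCind : IsIndependentDecompositionOf R C :=
    (indep_iff_rank R C hCdec).mpr
      (le_antisymm htotal (rank_le_of_decomposition R C hCdec))
  have hCref : IsRefinementOf C F := by
    intro X hX
    obtain ⟨⟨P, hP, B, hB, hX'⟩, -⟩ := (memC X).mp hX
    exact ⟨P, hP, hX' ▸ Finset.inter_subset_left⟩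
  have hCF : C = F := by
    by_contra h
    exact hFinest ⟨C, hCind, hCref, h⟩
  -- conclude
  intro P hP
  obtain ⟨v, hv⟩ := hF.1.1 P hP
  have hvR : v ∈ R := by
    rw [← hF.1.2.2]; exact Finset.mem_sup.mpr ⟨P, hP, hv⟩
  obtain ⟨B, hB, hvB⟩ := Finset.mem_sup.mp (hD.1.2.2 ▸ hvR)
  have hPB : P ∩ B ∈ F := by
    rw [← hCF]
    exact (memC _).mpr ⟨⟨P, hP, B, hB, rfl⟩, ⟨v, Finset.mem_inter.mpr ⟨hv, hvB⟩⟩⟩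
  have hPeq : P = P ∩ B := by
    by_contra h
    exact Finset.disjoint_left.mp (hF.1.2.1 hP hPB h) hv (Finset.mem_inter.mpr ⟨hv, hvB⟩)
  refine ⟨B, hB, fun x hx => ?_⟩
  rw [hPeq] at hx
  exact (Finset.mem_inter.mp hx).2

end Forward

/-- If `F` is the finest independent decomposition of `R` (the unique independent
decomposition admitting no proper independent refinement), then a decomposition of `R`
is independent iff it is a coarsening of `F`. -/
theorem independent_decomposition_iff_coarsening_of_finest
    {V : Type*} [DecidableEq V] [AddCommGroup V] [Module ℝ V] [FiniteDimensional ℝ V]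
    (R : Finset V) (hR : ∀ v ∈ R, v ≠ 0) (F : Finset (Finset V))
    (hF : IsIndependentDecompositionOf R F)
    (hFinest : ¬ ∃ D : Finset (Finset V), IsIndependentDecompositionOf R D ∧
      IsRefinementOf D F ∧ D ≠ F) :
    ∀ D : Finset (Finset V), IsDecompositionOf R D →
      (IsIndependentDecompositionOf R D ↔ IsRefinementOf F D) := by
  intro D hD
  constructor
  · exact refines_of_indep R F D hF hFinest
  · exact coarsening_indep R F D hF hD
end

section
/- Let V be a finite-dimensional real vector space, let R be a finite set of nonzero vectors in V, and fix a subset B of R that is a basis of span(R). For each connected component c of the coordinate graph of R with respect to B, let N_c be the set of all vectors v ∈ R whose coordinate vector with respect to the basis B has support contained in the vertex set of c. Then the collection {N_c : c a connected component of the coordinate graph} is a decomposition of R, it is independent, and it admits no proper independent refinement; i.e., it is the finest independent decomposition of R. -/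
/-- The coordinate graph of `R` with respect to a subset `B` of `R` that is a basis of
`span R`: vertices are the elements of `B`, and two distinct basis vectors are adjacent
iff some vector of `R \ B` has nonzero coefficients at both of them in its (unique)
expansion over the basis `B`. -/
def coordGraph {V : Type*} [AddCommGroup V] [Module ℝ V] (R B : Finset V) :
    SimpleGraph {x // x ∈ B} where
  Adj b₁ b₂ := b₁ ≠ b₂ ∧ ∃ v ∈ R, v ∉ B ∧ ∃ a : {x // x ∈ B} → ℝ,
    v = ∑ t : {x // x ∈ B}, a t • (t : V) ∧ a b₁ ≠ 0 ∧ a b₂ ≠ 0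
  symm := ⟨by
    rintro b₁ b₂ ⟨hne, v, hvR, hvB, a, hsum, h1, h2⟩
    exact ⟨hne.symm, v, hvR, hvB, a, hsum, h2, h1⟩⟩
  loopless := ⟨by rintro b ⟨hne, -⟩; exact hne rfl⟩

/-- For a connected component `c` of the coordinate graph, the block `N_c` consisting of
all vectors of `R` whose coordinate vector with respect to the basis `B` has support
contained in the vertex set of `c`. -/
noncomputable def componentBlock {V : Type*} [AddCommGroup V] [Module ℝ V] (R B : Finset V)
    (c : (coordGraph R B).ConnectedComponent) : Finset V := by
  classical
  exact R.filter (fun v => ∃ a : {x // x ∈ B} → ℝ,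
    v = ∑ t : {x // x ∈ B}, a t • (t : V) ∧
      ∀ t, a t ≠ 0 → (coordGraph R B).connectedComponentMk t = c)


open Submodule

section Aux

variable {V : Type*} [AddCommGroup V] [Module ℝ V]

/-- Chosen coordinates of a vector with respect to `B`. -/
noncomputable def co (B : Finset V) (v : V) : {x // x ∈ B} → ℝ :=
  open Classical in if h : ∃ a : {x // x ∈ B} → ℝ, v = ∑ t : {x // x ∈ B}, a t • (t : V) then h.choose else 0

variable {R B : Finset V}

theorem co_sum (hBspan : Submodule.span ℝ (B : Set V) = Submodule.span ℝ (R : Set V))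
    {v : V} (hv : v ∈ R) : v = ∑ t : {x // x ∈ B}, co B v t • (t : V) := by
  have hvmem : v ∈ Submodule.span ℝ (B : Set V) := by
    rw [hBspan]; exact subset_span hv
  obtain ⟨f, hf⟩ := mem_span_finset.mp hvmem
  have h : ∃ a : {x // x ∈ B} → ℝ, v = ∑ t : {x // x ∈ B}, a t • (t : V) := by
    refine ⟨fun t => f t, ?_⟩
    rw [← hf.2, ← Finset.sum_attach B (fun i => f i • i), Finset.univ_eq_attach]
  rw [co, dif_pos h]
  exact h.choose_spec

theorem co_unique (hBli : LinearIndependent ℝ ((↑) : {x // x ∈ B} → V))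
    {v : V} {a : {x // x ∈ B} → ℝ} (ha : v = ∑ t : {x // x ∈ B}, a t • (t : V)) :
    a = co B v := by
  have h : ∃ a : {x // x ∈ B} → ℝ, v = ∑ t : {x // x ∈ B}, a t • (t : V) := ⟨a, ha⟩
  have hco : v = ∑ t : {x // x ∈ B}, co B v t • (t : V) := by
    rw [co, dif_pos h]; exact h.choose_spec
  have hz : ∑ t : {x // x ∈ B}, (a t - co B v t) • (t : V) = 0 := by
    simp only [sub_smul, Finset.sum_sub_distrib, ← ha, ← hco, sub_self]
  funext t
  have := Fintype.linearIndependent_iff.mp hBli (fun t => a t - co B v t) hz t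
  linarith

theorem co_coe_ne (hBli : LinearIndependent ℝ ((↑) : {x // x ∈ B} → V)) (t₀ : {x // x ∈ B})
    {t : {x // x ∈ B}} (h : t ≠ t₀) : co B (t₀ : V) t = 0 := by
  classical
  have : (fun t => if t = t₀ then (1 : ℝ) else 0) = co B (t₀ : V) := by
    refine co_unique hBli ?_
    rw [Finset.sum_eq_single t₀]
    · simp
    · intro b _ hb; simp [hb]
    · simp
  rw [← this]
  simp [h]

theorem co_coe_self (hBli : LinearIndependent ℝ ((↑) : {x // x ∈ B} → V))
    (t₀ : {x // x ∈ B}) : co B (t₀ : V) t₀ = 1 := by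
  classical
  have : (fun t => if t = t₀ then (1 : ℝ) else 0) = co B (t₀ : V) := by
    refine co_unique hBli ?_
    rw [Finset.sum_eq_single t₀]
    · simp
    · intro b _ hb; simp [hb]
    · simp
  rw [← this]
  simp

theorem co_supp_nonempty (hBspan : Submodule.span ℝ (B : Set V) = Submodule.span ℝ (R : Set V))
    {v : V} (hv : v ∈ R) (hv0 : v ≠ 0) : ∃ t, co B v t ≠ 0 := by
  by_contra h
  push_neg at h
  apply hv0
  rw [co_sum hBspan hv]
  simp [h]

theorem supp_same_comp (hBli : LinearIndependent ℝ ((↑) : {x // x ∈ B} → V))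
    (hBspan : Submodule.span ℝ (B : Set V) = Submodule.span ℝ (R : Set V))
    {v : V} (hv : v ∈ R) {t₁ t₂ : {x // x ∈ B}}
    (h1 : co B v t₁ ≠ 0) (h2 : co B v t₂ ≠ 0) :
    (coordGraph R B).connectedComponentMk t₁ = (coordGraph R B).connectedComponentMk t₂ := by
  classical
  by_cases hvB : v ∈ B
  · have e1 : t₁ = ⟨v, hvB⟩ := by
      by_contra h; exact h1 (co_coe_ne hBli ⟨v, hvB⟩ h)
    have e2 : t₂ = ⟨v, hvB⟩ := by
      by_contra h; exact h2 (co_coe_ne hBli ⟨v, hvB⟩ h)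
    rw [e1, e2]
  · by_cases h12 : t₁ = t₂
    · rw [h12]
    · exact SimpleGraph.ConnectedComponent.sound
        (SimpleGraph.Adj.reachable ⟨h12, v, hv, hvB, co B v, co_sum hBspan hv, h1, h2⟩)

theorem mem_componentBlock_iff (hBli : LinearIndependent ℝ ((↑) : {x // x ∈ B} → V))
    (hBspan : Submodule.span ℝ (B : Set V) = Submodule.span ℝ (R : Set V))
    {v : V} (hv : v ∈ R) {c : (coordGraph R B).ConnectedComponent} :
    v ∈ componentBlock R B c ↔
      ∀ t, co B v t ≠ 0 → (coordGraph R B).connectedComponentMk t = c := by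
  classical
  rw [componentBlock, Finset.mem_filter]
  constructor
  · rintro ⟨-, a, hsum, hcomp⟩
    rw [co_unique hBli hsum] at hcomp
    exact hcomp
  · intro h
    exact ⟨hv, co B v, co_sum hBspan hv, h⟩

theorem coe_mem_componentBlock (hBli : LinearIndependent ℝ ((↑) : {x // x ∈ B} → V))
    (hBspan : Submodule.span ℝ (B : Set V) = Submodule.span ℝ (R : Set V))
    (hBR : B ⊆ R) (t₀ : {x // x ∈ B}) :
    (t₀ : V) ∈ componentBlock R B ((coordGraph R B).connectedComponentMk t₀) := by
  classical
  rw [mem_componentBlock_iff hBli hBspan (hBR t₀.2)]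
  intro t ht
  have : t = t₀ := by by_contra h; exact ht (co_coe_ne hBli t₀ h)
  rw [this]

theorem componentBlock_subset (c : (coordGraph R B).ConnectedComponent) :
    componentBlock R B c ⊆ R := by
  classical
  rw [componentBlock]
  exact Finset.filter_subset _ _

theorem span_componentBlock (hBli : LinearIndependent ℝ ((↑) : {x // x ∈ B} → V))
    (hBspan : Submodule.span ℝ (B : Set V) = Submodule.span ℝ (R : Set V))
    (hBR : B ⊆ R) (c : (coordGraph R B).ConnectedComponent) :
    Submodule.span ℝ ((componentBlock R B c : Finset V) : Set V) =
      Submodule.span ℝ (((↑) : {x // x ∈ B} → V) ''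
        {t | (coordGraph R B).connectedComponentMk t = c}) := by
  apply le_antisymm
  · rw [Submodule.span_le]
    intro v hvmem
    have hv : v ∈ R := componentBlock_subset c hvmem
    have hall := (mem_componentBlock_iff hBli hBspan hv).mp hvmem
    rw [SetLike.mem_coe, co_sum hBspan hv]
    refine Submodule.sum_mem _ (fun t _ => ?_)
    by_cases ht : co B v t = 0
    · rw [ht, zero_smul]; exact Submodule.zero_mem _
    · exact Submodule.smul_mem _ _ (Submodule.subset_span ⟨t, hall t ht, rfl⟩)
  · rw [Submodule.span_le]
    rintro - ⟨t, htc, rfl⟩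
    refine Submodule.subset_span ?_
    rw [Finset.mem_coe]
    exact htc ▸ coe_mem_componentBlock hBli hBspan hBR t

end Aux

/-- The collection `{N_c : c a connected component of the coordinate graph}` is the finest
independent decomposition of `R`: it is an independent decomposition of `R` admitting
no proper independent refinement. -/
theorem componentBlocks_finest_independent_decomposition
    {V : Type*} [DecidableEq V] [AddCommGroup V] [Module ℝ V] [FiniteDimensional ℝ V]
    (R B : Finset V) (hR : ∀ v ∈ R, v ≠ 0) (hBR : B ⊆ R)
    (hBli : LinearIndependent ℝ ((↑) : {x // x ∈ B} → V))
    (hBspan : Submodule.span ℝ (B : Set V) = Submodule.span ℝ (R : Set V))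
    (F : Finset (Finset V))
    (hF : (F : Set (Finset V)) = Set.range (componentBlock R B)) :
    IsIndependentDecompositionOf R F ∧
      ¬ ∃ D : Finset (Finset V), IsIndependentDecompositionOf R D ∧
        IsRefinementOf D F ∧ D ≠ F := by
  classical
  have hmemF : ∀ c : (coordGraph R B).ConnectedComponent, componentBlock R B c ∈ F := by
    intro c
    rw [← Finset.mem_coe, hF]
    exact Set.mem_range_self c
  have hFblock : ∀ P ∈ F, ∃ c, componentBlock R B c = P := by
    intro P hP
    have : P ∈ (F : Set (Finset V)) := hP
    rw [hF] at this
    exact this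
  -- the decomposition property
  have hdec : IsDecompositionOf R F := by
    refine ⟨?_, ?_, ?_⟩
    · intro P hP
      obtain ⟨c, rfl⟩ := hFblock P hP
      obtain ⟨t, rfl⟩ := c.exists_rep
      exact ⟨t, coe_mem_componentBlock hBli hBspan hBR t⟩
    · intro P hP P' hP' hne
      obtain ⟨c, rfl⟩ := hFblock P hP
      obtain ⟨c', rfl⟩ := hFblock P' hP'
      simp only [Function.onFun, id]
      rw [Finset.disjoint_left]
      intro v hv hv'
      have hvR : v ∈ R := componentBlock_subset c hv
      obtain ⟨t, ht⟩ := co_supp_nonempty hBspan hvR (hR v hvR)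
      have h1 := (mem_componentBlock_iff hBli hBspan hvR).mp hv t ht
      have h2 := (mem_componentBlock_iff hBli hBspan hvR).mp hv' t ht
      exact hne (by rw [← h1, h2])
    · apply le_antisymm
      · refine Finset.sup_le fun P hP => ?_
        obtain ⟨c, rfl⟩ := hFblock P hP
        exact componentBlock_subset c
      · intro v hv
        obtain ⟨t, ht⟩ := co_supp_nonempty hBspan hv (hR v hv)
        have hvmem : v ∈ componentBlock R B ((coordGraph R B).connectedComponentMk t) := by
          rw [mem_componentBlock_iff hBli hBspan hv]
          intro t' ht'
          exact supp_same_comp hBli hBspan hv ht' ht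
        exact Finset.le_sup (f := id) (hmemF _) hvmem
  -- independence of the spans of the coordinate fibers
  have hS : iSupIndep (fun c : (coordGraph R B).ConnectedComponent =>
      Submodule.span ℝ (((↑) : {x // x ∈ B} → V) ''
        {t | (coordGraph R B).connectedComponentMk t = c})) := by
    rw [iSupIndep_def]
    intro c
    refine Disjoint.mono_right ?_ (hBli.disjoint_span_image
      (disjoint_compl_right (a := {t | (coordGraph R B).connectedComponentMk t = c})))
    refine iSup₂_le fun j hj => ?_
    refine Submodule.span_mono (Set.image_mono ?_)
    intro t ht
    simp only [Set.mem_setOf_eq] at ht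
    simp only [Set.mem_compl_iff, Set.mem_setOf_eq]
    intro h
    exact hj (by rw [← ht, h])
  have hspanF : ∀ P : {P // P ∈ F}, ∃ c, componentBlock R B c = (P : Finset V) :=
    fun P => hFblock P P.2
  choose e he using hspanF
  have heq : (fun P : {P // P ∈ F} => Submodule.span ℝ (((P : Finset V) : Set V))) =
      (fun c : (coordGraph R B).ConnectedComponent =>
        Submodule.span ℝ (((↑) : {x // x ∈ B} → V) ''
          {t | (coordGraph R B).connectedComponentMk t = c})) ∘ e := by
    funext P
    simp only [Function.comp_apply]
    rw [← he P, span_componentBlock hBli hBspan hBR]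
  have hein : Function.Injective e := by
    intro P Q hPQ
    apply Subtype.ext
    rw [← he P, ← he Q, hPQ]
  have hind : iSupIndep (fun P : {P // P ∈ F} =>
      Submodule.span ℝ (((P : Finset V) : Set V))) := by
    rw [heq]
    exact hS.comp hein
  have hsup : (⨆ P : {P // P ∈ F}, Submodule.span ℝ (((P : Finset V) : Set V))) =
      Submodule.span ℝ (R : Set V) := by
    apply le_antisymm
    · refine iSup_le fun P => Submodule.span_mono ?_
      obtain ⟨c, hc⟩ := hFblock (P : Finset V) P.2
      rw [← hc]
      exact Finset.coe_subset.mpr (componentBlock_subset c)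
    · rw [← hBspan, Submodule.span_le]
      intro b hb
      have hbB : b ∈ B := hb
      have hmem : b ∈ componentBlock R B
          ((coordGraph R B).connectedComponentMk ⟨b, hbB⟩) :=
        coe_mem_componentBlock hBli hBspan hBR ⟨b, hbB⟩
      exact le_iSup (fun P : {P // P ∈ F} => Submodule.span ℝ (((P : Finset V) : Set V)))
        ⟨componentBlock R B _, hmemF _⟩ (Submodule.subset_span hmem)
  refine ⟨⟨hdec, hind, hsup⟩, ?_⟩
  rintro ⟨D, ⟨⟨hDne, hDdisj, hDsup⟩, hDind, -⟩, hDref, hDneq⟩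
  apply hDneq
  have hexists : ∀ v ∈ R, ∃ Q, Q ∈ D ∧ v ∈ Q := by
    intro v hv
    rw [← hDsup] at hv
    obtain ⟨Q, hQ, hvQ⟩ := Finset.mem_sup.mp hv
    exact ⟨Q, hQ, hvQ⟩
  choose blk hblk1 hblk2 using hexists
  have huniq : ∀ (v) (hv : v ∈ R) (Q), Q ∈ D → v ∈ Q → Q = blk v hv := by
    intro v hv Q hQ hvQ
    by_contra hne
    exact Finset.disjoint_left.mp (hDdisj hQ (hblk1 v hv) hne) hvQ (hblk2 v hv)
  have claim1 : ∀ (v) (hv : v ∈ R) (t : {x // x ∈ B}), co B v t ≠ 0 →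
      (t : V) ∈ blk v hv := by
    intro v hv t hco
    by_contra htQ
    set Q := blk v hv with hQdef
    have hQ : Q ∈ D := hblk1 v hv
    set T : Finset {x // x ∈ B} := Finset.univ.filter (fun s => (s : V) ∈ Q) with hT
    have hvsum := co_sum hBspan hv
    have hsplit : ∑ s ∈ T, co B v s • (s : V) + ∑ s ∈ Tᶜ, co B v s • (s : V) = v := by
      rw [Finset.sum_add_sum_compl, ← hvsum]
    have hw1 : ∑ s ∈ T, co B v s • (s : V) ∈ Submodule.span ℝ ((Q : Finset V) : Set V) := by
      refine Submodule.sum_mem _ fun s hs => Submodule.smul_mem _ _ (Submodule.subset_span ?_)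
      exact (Finset.mem_filter.mp hs).2
    have hw2mem : ∑ s ∈ Tᶜ, co B v s • (s : V) ∈
        ⨆ (j : {P // P ∈ D}) (_ : j ≠ ⟨Q, hQ⟩),
          Submodule.span ℝ (((j : Finset V) : Set V)) := by
      refine Submodule.sum_mem _ fun s hs => ?_
      have hsR : (s : V) ∈ R := hBR s.2
      have hsnot : (s : V) ∉ Q := fun h =>
        (Finset.mem_compl.mp hs) (Finset.mem_filter.mpr ⟨Finset.mem_univ s, h⟩)
      have hQs := hblk1 _ hsR
      have hne : (⟨blk _ hsR, hQs⟩ : {P // P ∈ D}) ≠ ⟨Q, hQ⟩ := by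
        intro h
        apply hsnot
        have hQeq : blk (s : V) hsR = Q := congrArg Subtype.val h
        rw [← hQeq]
        exact hblk2 _ hsR
      refine Submodule.mem_iSup_of_mem ⟨blk _ hsR, hQs⟩ ?_
      refine Submodule.mem_iSup_of_mem hne ?_
      exact Submodule.smul_mem _ _ (Submodule.subset_span (hblk2 _ hsR))
    have hw2Q : ∑ s ∈ Tᶜ, co B v s • (s : V) ∈
        Submodule.span ℝ ((Q : Finset V) : Set V) := by
      have hvQ : v ∈ Submodule.span ℝ ((Q : Finset V) : Set V) :=
        Submodule.subset_span (hblk2 v hv)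
      have hsub := Submodule.sub_mem _ hvQ hw1
      have heq2 : ∑ s ∈ Tᶜ, co B v s • (s : V) = v - ∑ s ∈ T, co B v s • (s : V) :=
        eq_sub_of_add_eq' hsplit
      rw [heq2]
      exact hsub
    have hw2 : ∑ s ∈ Tᶜ, co B v s • (s : V) = 0 := by
      have hdisj := iSupIndep_def.mp hDind ⟨Q, hQ⟩
      exact Submodule.disjoint_def.mp hdisj _ hw2Q hw2mem
    have hg : ∑ s : {x // x ∈ B}, (fun s => if s ∈ Tᶜ then co B v s else 0) s • (s : V)
        = 0 := by
      have hsw : ∀ s : {x // x ∈ B}, (if s ∈ Tᶜ then co B v s else 0) • (s : V)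
          = if s ∈ Tᶜ then co B v s • (s : V) else 0 := fun s => by split <;> simp
      simp only [hsw]
      rw [Finset.sum_ite_mem, Finset.univ_inter]
      exact hw2
    have hzero := Fintype.linearIndependent_iff.mp hBli _ hg t
    have htT : t ∈ Tᶜ := Finset.mem_compl.mpr (fun h => htQ (Finset.mem_filter.mp h).2)
    rw [if_pos htT] at hzero
    exact hco hzero
  have claim4 : ∀ (v) (hv : v ∈ R) (t : {x // x ∈ B}), co B v t ≠ 0 →
      blk v hv = blk (t : V) (hBR t.2) :=
    fun v hv t hco => huniq (t : V) (hBR t.2) (blk v hv) (hblk1 v hv) (claim1 v hv t hco)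
  have claim2 : ∀ t₁ t₂ : {x // x ∈ B}, (coordGraph R B).Adj t₁ t₂ →
      blk (t₁ : V) (hBR t₁.2) = blk (t₂ : V) (hBR t₂.2) := by
    rintro t₁ t₂ ⟨hne, v, hvR, hvB, a, hsum, h1, h2⟩
    rw [co_unique hBli hsum] at h1 h2
    rw [← claim4 v hvR t₁ h1, ← claim4 v hvR t₂ h2]
  have claim3 : ∀ t₁ t₂ : {x // x ∈ B},
      (coordGraph R B).connectedComponentMk t₁ = (coordGraph R B).connectedComponentMk t₂ →
      blk (t₁ : V) (hBR t₁.2) = blk (t₂ : V) (hBR t₂.2) := by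
    intro t₁ t₂ h
    obtain ⟨p⟩ := SimpleGraph.ConnectedComponent.exact h
    clear h
    induction p with
    | nil => rfl
    | cons hadj p ih => exact (claim2 _ _ hadj).trans ih
  have claim6 : ∀ (v) (hv : v ∈ R) (t₀ : {x // x ∈ B}),
      v ∈ componentBlock R B ((coordGraph R B).connectedComponentMk t₀) →
      blk v hv = blk (t₀ : V) (hBR t₀.2) := by
    intro v hv t₀ hmem
    obtain ⟨t, ht⟩ := co_supp_nonempty hBspan hv (hR v hv)
    have hc := (mem_componentBlock_iff hBli hBspan hv).mp hmem t ht
    rw [claim4 v hv t ht, claim3 t t₀ hc]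
  have claim7 : ∀ t₀ : {x // x ∈ B},
      componentBlock R B ((coordGraph R B).connectedComponentMk t₀)
        = blk (t₀ : V) (hBR t₀.2) := by
    intro t₀
    apply Finset.Subset.antisymm
    · intro v hvmem
      have hv : v ∈ R := componentBlock_subset _ hvmem
      rw [← claim6 v hv t₀ hvmem]
      exact hblk2 v hv
    · obtain ⟨P, hPF, hsub⟩ := hDref _ (hblk1 (t₀ : V) (hBR t₀.2))
      obtain ⟨c', rfl⟩ := hFblock P hPF
      have ht₀P : (t₀ : V) ∈ componentBlock R B c' := hsub (hblk2 _ _)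
      have h1 := (mem_componentBlock_iff hBli hBspan (hBR t₀.2)).mp ht₀P t₀
        (by rw [co_coe_self hBli t₀]; exact one_ne_zero)
      rwa [← h1] at hsub
  apply Finset.Subset.antisymm
  · intro Q hQ
    obtain ⟨v, hvQ⟩ := hDne Q hQ
    have hvR : v ∈ R := by
      rw [← hDsup]
      exact Finset.mem_sup.mpr ⟨Q, hQ, hvQ⟩
    have hQeq : Q = blk v hvR := huniq v hvR Q hQ hvQ
    obtain ⟨P, hPF, hsub⟩ := hDref Q hQ
    obtain ⟨c, rfl⟩ := hFblock P hPF
    obtain ⟨t₀, rfl⟩ := c.exists_rep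
    have hvP : v ∈ componentBlock R B ((coordGraph R B).connectedComponentMk t₀) := hsub hvQ
    show Q ∈ F
    rw [hQeq, claim6 v hvR t₀ hvP, ← claim7 t₀]
    exact hmemF _
  · intro P hPF
    obtain ⟨c, rfl⟩ := hFblock P hPF
    obtain ⟨t₀, rfl⟩ := c.exists_rep
    show componentBlock R B ((coordGraph R B).connectedComponentMk t₀) ∈ D
    rw [claim7 t₀]
    exact hblk1 _ _
end

section
/- Let V be a finite-dimensional real vector space and let R be a finite set of nonzero vectors in V. If the finest independent decomposition of R has exactly p blocks, then the number of independent decompositions of R equals the number of partitions of a set with p elements (the Bell number B_p). -/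
/-- A partition of the finite type `Fin p`: a collection of nonempty pairwise disjoint
subsets whose union is everything. -/
def IsPartitionOfFin (p : ℕ) (Q : Finset (Finset (Fin p))) : Prop :=
  (∀ B ∈ Q, B.Nonempty) ∧ (Q : Set (Finset (Fin p))).PairwiseDisjoint id ∧
    Q.sup id = Finset.univ


section ModularAux

variable {α : Type*} {β : Type*} [Lattice β] [OrderBot β]

theorem supIndep_mono_fun' {s : Finset α} {f g : α → β}
    (h : ∀ i ∈ s, f i ≤ g i) (hg : s.SupIndep g) : s.SupIndep f := by
  intro t ht i hi hit
  exact (hg ht hi hit).mono (h i hi)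
    (Finset.sup_le fun j hj => (h j (ht hj)).trans (Finset.le_sup hj))

theorem supIndep_disjoint_sup_sup [IsModularLattice β] {s : Finset α} {f : α → β}
    (hs : s.SupIndep f) :
    ∀ t : Finset α, t ⊆ s → ∀ u : Finset α, u ⊆ s → Disjoint t u →
      Disjoint (t.sup f) (u.sup f) := by
  classical
  intro t
  induction t using Finset.induction_on with
  | empty => intro _ u _ _; simp
  | @insert a t' ha ih =>
    intro hts u hus htu
    rw [Finset.sup_insert]
    have h1 : Disjoint (t'.sup f) (u.sup f) :=
      ih ((Finset.subset_insert a t').trans hts) u hus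
        (htu.mono_left (Finset.subset_insert a t' : t' ≤ insert a t'))
    have hanotu : a ∉ u := fun h =>
      Finset.disjoint_left.1 htu (Finset.mem_insert_self a t') h
    have h2 : Disjoint (f a) ((t' ∪ u).sup f) :=
      hs (Finset.union_subset ((Finset.subset_insert a t').trans hts) hus)
        (hts (Finset.mem_insert_self a t'))
        (by simp [Finset.mem_union, ha, hanotu])
    rw [Finset.sup_union] at h2
    exact Disjoint.disjoint_sup_left_of_disjoint_sup_right h1 h2

theorem supIndep_coarsen [IsModularLattice β] [DecidableEq α] {s : Finset α} {f : α → β}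
    (hs : s.SupIndep f) {C : Finset (Finset α)} (hsub : ∀ c ∈ C, c ⊆ s)
    (hdisj : (C : Set (Finset α)).PairwiseDisjoint id) :
    C.SupIndep (fun c => c.sup f) := by
  intro t ht c hc hct
  have hrw : t.sup (fun c => c.sup f) = (t.sup id).sup f := by
    rw [Finset.sup_eq_biUnion t id, Finset.sup_biUnion]
    rfl
  rw [hrw]
  refine supIndep_disjoint_sup_sup hs c (hsub c hc) (t.sup id)
    (Finset.sup_le fun c' hc' => hsub c' (ht hc')) ?_
  rw [Finset.disjoint_left]
  intro x hxc hxt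
  obtain ⟨c', hc', hxc'⟩ := Finset.mem_sup.1 hxt
  have hne : c ≠ c' := fun h => hct (h ▸ hc')
  exact Finset.disjoint_left.1 (hdisj hc (ht hc') hne) hxc hxc'

theorem supIndep_glue [IsModularLattice β] [DecidableEq α] {ι' : Type*}
    {s : Finset ι'} {g : ι' → Finset α} {f : α → β}
    (hs : s.SupIndep fun i => (g i).sup f) (hg : ∀ i ∈ s, (g i).SupIndep f) :
    (s.sup g).SupIndep f := by
  classical
  intro t ht i hi hit
  obtain ⟨i₀, hi₀s, hii₀⟩ := Finset.mem_sup.1 hi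
  have htsplit : t = t ∩ g i₀ ∪ t \ g i₀ := by
    ext x; by_cases h : x ∈ g i₀ <;> simp [h]
  have h0 : Disjoint (f i) ((t ∩ g i₀).sup f) :=
    hg i₀ hi₀s Finset.inter_subset_right hii₀
      (fun h => hit (Finset.mem_inter.1 h).1)
  have h1 : (t \ g i₀).sup f ≤ (s.erase i₀).sup (fun i' => (g i').sup f) := by
    refine Finset.sup_le fun j hj => ?_
    obtain ⟨hjt, hjg⟩ := Finset.mem_sdiff.1 hj
    obtain ⟨j₀, hj₀s, hjj₀⟩ := Finset.mem_sup.1 (ht hjt)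
    have hne : j₀ ≠ i₀ := fun h => hjg (h ▸ hjj₀)
    exact (Finset.le_sup hjj₀).trans
      (Finset.le_sup (f := fun i' => (g i').sup f) (Finset.mem_erase.2 ⟨hne, hj₀s⟩))
  have h2 : Disjoint ((g i₀).sup f) ((s.erase i₀).sup fun i' => (g i').sup f) :=
    Finset.supIndep_iff_disjoint_erase.1 hs i₀ hi₀s
  have h3 : Disjoint (f i ⊔ (t ∩ g i₀).sup f) ((t \ g i₀).sup f) :=
    h2.mono (sup_le (Finset.le_sup hii₀)
      (Finset.sup_le fun j hj => Finset.le_sup (Finset.mem_inter.1 hj).2)) h1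
  have h4 := h0.disjoint_sup_right_of_disjoint_sup_left h3
  rw [htsplit, Finset.sup_union]
  exact h4

theorem span_finset_sup_s7 {V : Type*} [DecidableEq V] [AddCommGroup V] [Module ℝ V]
    {ι : Type*} (s : Finset ι) (f : ι → Finset V) :
    Submodule.span ℝ ((s.sup f : Finset V) : Set V)
      = s.sup (fun i => Submodule.span ℝ ((f i : Finset V) : Set V)) := by
  induction s using Finset.cons_induction with
  | empty => simp
  | cons a s ha ih =>
    simp only [Finset.sup_cons, Finset.sup_eq_union, Finset.coe_union,
      Submodule.span_union, ih]

end ModularAux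

theorem isIndep_iff' {V : Type*} [DecidableEq V] [AddCommGroup V] [Module ℝ V]
    (R : Finset V) (D : Finset (Finset V)) :
    IsIndependentDecompositionOf R D ↔
      IsDecompositionOf R D ∧
        D.SupIndep (fun P => Submodule.span ℝ ((P : Finset V) : Set V)) := by
  have hsup : (⨆ P : {P // P ∈ D}, Submodule.span ℝ ((P : Finset V) : Set V))
      = D.sup (fun P => Submodule.span ℝ ((P : Finset V) : Set V)) := by
    rw [Finset.sup_eq_iSup, iSup_subtype]
  constructor
  · rintro ⟨hdec, hind, -⟩
    exact ⟨hdec, iSupIndep_comp_coe_iff_supIndep.1 hind⟩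
  · rintro ⟨hdec, hind⟩
    refine ⟨hdec, iSupIndep_comp_coe_iff_supIndep.2 hind, ?_⟩
    rw [hsup, ← hdec.2.2, span_finset_sup_s7 D id]
    rfl
/-- If the finest independent decomposition of `R` has exactly `p` blocks, then the number
of independent decompositions of `R` equals the number of partitions of a `p`-element set
(the Bell number `B_p`). -/
theorem card_independent_decompositions_eq_bell
    {V : Type*} [DecidableEq V] [AddCommGroup V] [Module ℝ V] [FiniteDimensional ℝ V]
    (R : Finset V) (hR : ∀ v ∈ R, v ≠ 0) (F : Finset (Finset V)) (p : ℕ)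
    (hF : IsIndependentDecompositionOf R F)
    (hFinest : ¬ ∃ D : Finset (Finset V), IsIndependentDecompositionOf R D ∧
      IsRefinementOf D F ∧ D ≠ F)
    (hp : F.card = p) :
    {D : Finset (Finset V) | IsIndependentDecompositionOf R D}.ncard =
      {Q : Finset (Finset (Fin p)) | IsPartitionOfFin p Q}.ncard := by
  classical
  subst hp
  obtain ⟨⟨hFne, hFdisj, hFsup⟩, hFsi⟩ := (isIndep_iff' R F).1 hF
  set ε := F.equivFin with hε
  set B : Fin F.card → Finset V := fun i => (ε.symm i : Finset V) with hB
  have hBmem : ∀ i, B i ∈ F := fun i => (ε.symm i).2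
  have hBinj : Function.Injective B := fun i j h => ε.symm.injective (Subtype.ext h)
  have hBsurj : ∀ b ∈ F, ∃ i, B i = b := fun b hb => ⟨ε ⟨b, hb⟩, by simp [hB]⟩
  have hunivB : Finset.univ.sup B = F.sup id := by
    apply le_antisymm
    · exact Finset.sup_le fun i _ => Finset.le_sup (f := id) (hBmem i)
    · refine Finset.sup_le fun b hb => ?_
      obtain ⟨i, rfl⟩ := hBsurj b hb
      exact Finset.le_sup (Finset.mem_univ i)
  have hFeq : F = Finset.univ.map ⟨B, hBinj⟩ := by
    ext b
    simp only [Finset.mem_map, Finset.mem_univ, true_and, Function.Embedding.coeFn_mk]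
    constructor
    · intro hb; exact hBsurj b hb
    · rintro ⟨i, rfl⟩; exact hBmem i
  have hunivsi : Finset.univ.SupIndep
      (fun i => Submodule.span ℝ ((B i : Finset V) : Set V)) := by
    have h := hFsi
    rw [hFeq] at h
    exact Finset.supIndep_map.1 h
  -- Key lemma A: every independent decomposition coarsens F
  have keyA : ∀ D : Finset (Finset V), IsIndependentDecompositionOf R D →
      ∀ b ∈ F, ∃ Q ∈ D, b ⊆ Q := by
    intro D hD b hb
    obtain ⟨⟨hDne, hDdisj, hDsup⟩, hDsi⟩ := (isIndep_iff' R D).1 hD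
    set g : Finset V → Finset (Finset V) :=
      fun Q => (F.filter fun c => (Q ∩ c).Nonempty).image (fun c => Q ∩ c) with hg
    set E : Finset (Finset V) := D.sup g with hE
    have hmemE : ∀ X, X ∈ E ↔ ∃ Q ∈ D, ∃ c ∈ F, (Q ∩ c).Nonempty ∧ Q ∩ c = X := by
      intro X
      simp only [hE, Finset.mem_sup, hg, Finset.mem_image, Finset.mem_filter]
      constructor
      · rintro ⟨Q, hQ, c, ⟨hc, hne⟩, hX⟩
        exact ⟨Q, hQ, c, hc, hne, hX⟩
      · rintro ⟨Q, hQ, c, hc, hne, hX⟩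
        exact ⟨Q, hQ, c, ⟨hc, hne⟩, hX⟩
    have hQsubR : ∀ Q ∈ D, Q ⊆ R := fun Q hQ => hDsup ▸ Finset.le_sup (f := id) hQ
    have hEsup : E.sup id = R := by
      apply le_antisymm
      · refine Finset.sup_le fun X hX => ?_
        obtain ⟨Q, hQ, c, hc, hne, hX⟩ := (hmemE X).1 hX
        exact le_trans (hX ▸ (Finset.inter_subset_left : Q ∩ c ≤ Q)) (hQsubR Q hQ)
      · intro v hv
        have hv1 : v ∈ D.sup id := by rw [hDsup]; exact hv
        have hv2 : v ∈ F.sup id := by rw [hFsup]; exact hv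
        obtain ⟨Q, hQ, hvQ⟩ := Finset.mem_sup.1 hv1
        obtain ⟨c, hc, hvc⟩ := Finset.mem_sup.1 hv2
        exact Finset.mem_sup.2 ⟨Q ∩ c,
          (hmemE _).2 ⟨Q, hQ, c, hc, ⟨v, Finset.mem_inter.2 ⟨hvQ, hvc⟩⟩, rfl⟩,
          Finset.mem_inter.2 ⟨hvQ, hvc⟩⟩
    have hEdec : IsDecompositionOf R E := by
      refine ⟨?_, ?_, hEsup⟩
      · intro X hX
        obtain ⟨Q, hQ, c, hc, hne, hX⟩ := (hmemE X).1 hX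
        exact hX ▸ hne
      · intro X hX Y hY hne'
        obtain ⟨Q, hQ, c, hc, -, hX'⟩ := (hmemE X).1 (Finset.mem_coe.1 hX)
        obtain ⟨Q', hQ', c', hc', -, hY'⟩ := (hmemE Y).1 (Finset.mem_coe.1 hY)
        simp only [Function.onFun, id_eq]
        rw [Finset.disjoint_left]
        intro v hvX hvY
        rw [← hX'] at hvX
        rw [← hY'] at hvY
        obtain ⟨hvQ, hvc⟩ := Finset.mem_inter.1 hvX
        obtain ⟨hvQ', hvc'⟩ := Finset.mem_inter.1 hvY
        by_cases hQQ : Q = Q'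
        · subst hQQ
          by_cases hcc : c = c'
          · exact hne' (by rw [← hX', ← hY', hcc])
          · exact Finset.disjoint_left.1 (hFdisj hc hc' hcc) hvc hvc'
        · exact Finset.disjoint_left.1 (hDdisj hQ hQ' hQQ) hvQ hvQ'
    have hEsi : E.SupIndep (fun X => Submodule.span ℝ ((X : Finset V) : Set V)) := by
      refine supIndep_glue ?_ ?_
      · refine supIndep_mono_fun'
          (g := fun Q => Submodule.span ℝ ((Q : Finset V) : Set V)) ?_ hDsi
        intro Q hQ
        refine Finset.sup_le fun X hX => ?_
        obtain ⟨c, hc, hX⟩ := Finset.mem_image.1 hX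
        refine Submodule.span_mono ?_
        rw [← hX]
        exact Finset.coe_subset.2 Finset.inter_subset_left
      · intro Q hQ
        refine Finset.SupIndep.image ?_
        refine supIndep_mono_fun'
          (g := fun c => Submodule.span ℝ ((c : Finset V) : Set V)) ?_
          (hFsi.subset (Finset.filter_subset _ _))
        intro c hc
        exact Submodule.span_mono (Finset.coe_subset.2 Finset.inter_subset_right)
    have hEindep : IsIndependentDecompositionOf R E := (isIndep_iff' R E).2 ⟨hEdec, hEsi⟩
    have hErefine : IsRefinementOf E F := by
      intro X hX
      obtain ⟨Q, hQ, c, hc, -, hX'⟩ := (hmemE X).1 hX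
      exact ⟨c, hc, hX' ▸ Finset.inter_subset_right⟩
    have hEF : E = F := by
      by_contra hne'
      exact hFinest ⟨E, hEindep, hErefine, hne'⟩
    have hbE : b ∈ E := hEF ▸ hb
    obtain ⟨Q, hQ, c, hc, -, hX'⟩ := (hmemE b).1 hbE
    exact ⟨Q, hQ, hX' ▸ Finset.inter_subset_left⟩
  -- Key lemma: each block of D is the union of the blocks of F contained in it
  have keyQ : ∀ D : Finset (Finset V), IsIndependentDecompositionOf R D →
      ∀ Q ∈ D, (F.filter fun c => c ⊆ Q).sup id = Q := by
    intro D hD Q hQ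
    apply le_antisymm
    · exact Finset.sup_le fun c hc => (Finset.mem_filter.1 hc).2
    · intro v hv
      have hQR : Q ⊆ R := hD.1.2.2 ▸ Finset.le_sup (f := id) hQ
      have hvF : v ∈ F.sup id := by rw [hFsup]; exact hQR hv
      obtain ⟨c, hc, hvc⟩ := Finset.mem_sup.1 hvF
      obtain ⟨Q', hQ', hcQ'⟩ := keyA D hD c hc
      have hQQ' : Q = Q' := by
        by_contra hne'
        exact Finset.disjoint_left.1 (hD.1.2.1 hQ hQ' hne') hv (hcQ' hvc)
      refine Finset.mem_sup.2 ⟨c, Finset.mem_filter.2 ⟨hc, ?_⟩, hvc⟩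
      rw [hQQ']; exact hcQ'
  -- the forward map sends independent decompositions to partitions of Fin F.card
  have hφmem : ∀ D, IsIndependentDecompositionOf R D →
      IsPartitionOfFin F.card (D.image (fun Q => Finset.univ.filter (fun i => B i ⊆ Q))) := by
    intro D hD
    refine ⟨?_, ?_, ?_⟩
    · intro c hc
      obtain ⟨Q, hQ, rfl⟩ := Finset.mem_image.1 hc
      have hQne : Q.Nonempty := hD.1.1 Q hQ
      obtain ⟨v, hv⟩ := hQne
      have hkey := keyQ D hD Q hQ
      rw [← hkey] at hv
      obtain ⟨b, hb, hvb⟩ := Finset.mem_sup.1 hv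
      obtain ⟨hbF, hbQ⟩ := Finset.mem_filter.1 hb
      obtain ⟨i, rfl⟩ := hBsurj b hbF
      exact ⟨i, Finset.mem_filter.2 ⟨Finset.mem_univ i, hbQ⟩⟩
    · intro c hc c' hc' hne'
      obtain ⟨Q, hQ, rfl⟩ := Finset.mem_image.1 (Finset.mem_coe.1 hc)
      obtain ⟨Q', hQ', rfl⟩ := Finset.mem_image.1 (Finset.mem_coe.1 hc')
      have hQQ : Q ≠ Q' := fun h => hne' (by rw [h])
      simp only [Function.onFun, id_eq]
      rw [Finset.disjoint_left]
      intro i hi hi'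
      have h1 : B i ⊆ Q := (Finset.mem_filter.1 hi).2
      have h2 : B i ⊆ Q' := (Finset.mem_filter.1 hi').2
      obtain ⟨v, hv⟩ := hFne (B i) (hBmem i)
      exact Finset.disjoint_left.1 (hD.1.2.1 hQ hQ' hQQ) (h1 hv) (h2 hv)
    · refine Finset.eq_univ_of_forall fun i => ?_
      obtain ⟨Q, hQ, hBQ⟩ := keyA D hD (B i) (hBmem i)
      exact Finset.mem_sup.2 ⟨_, Finset.mem_image_of_mem _ hQ,
        Finset.mem_filter.2 ⟨Finset.mem_univ i, hBQ⟩⟩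
  -- the reverse map sends partitions to independent decompositions
  have hψmem : ∀ P, IsPartitionOfFin F.card P →
      IsIndependentDecompositionOf R (P.image (fun c => c.sup B)) := by
    intro P hP
    obtain ⟨hPne, hPdisj, hPsup⟩ := hP
    have hsupid : (P.image (fun c => c.sup B)).sup id = R := by
      rw [Finset.sup_image]
      have h2 : P.sup (id ∘ fun c => c.sup B) = (P.sup id).sup B := by
        rw [Finset.sup_eq_biUnion P id, Finset.sup_biUnion]; rfl
      rw [h2, hPsup, hunivB, hFsup]
    refine (isIndep_iff' R _).2 ⟨⟨?_, ?_, hsupid⟩, ?_⟩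
    · intro X hX
      obtain ⟨c, hc, rfl⟩ := Finset.mem_image.1 hX
      obtain ⟨i, hi⟩ := hPne c hc
      obtain ⟨v, hv⟩ := hFne (B i) (hBmem i)
      exact ⟨v, Finset.mem_sup.2 ⟨i, hi, hv⟩⟩
    · intro X hX Y hY hne'
      obtain ⟨c, hc, rfl⟩ := Finset.mem_image.1 (Finset.mem_coe.1 hX)
      obtain ⟨c', hc', rfl⟩ := Finset.mem_image.1 (Finset.mem_coe.1 hY)
      have hcc : c ≠ c' := fun h => hne' (by rw [h])
      simp only [Function.onFun, id_eq]
      rw [Finset.disjoint_left]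
      intro v hv hv'
      obtain ⟨i, hi, hvi⟩ := Finset.mem_sup.1 hv
      obtain ⟨j, hj, hvj⟩ := Finset.mem_sup.1 hv'
      have hij : i ≠ j := fun h => Finset.disjoint_left.1 (hPdisj hc hc' hcc) hi (h ▸ hj)
      have hBij : B i ≠ B j := fun h => hij (hBinj h)
      exact Finset.disjoint_left.1 (hFdisj (hBmem i) (hBmem j) hBij) hvi hvj
    · apply Finset.SupIndep.image
      have h1 : P.SupIndep
          (fun c => c.sup (fun i => Submodule.span ℝ ((B i : Finset V) : Set V))) :=
        supIndep_coarsen hunivsi (fun c _ => Finset.subset_univ c) hPdisj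
      refine supIndep_mono_fun' ?_ h1
      intro c hc
      exact le_of_eq (span_finset_sup_s7 c B)
  -- round trips
  have hψφ : ∀ D, IsIndependentDecompositionOf R D →
      ((D.image (fun Q => Finset.univ.filter (fun i => B i ⊆ Q))).image
        (fun c => c.sup B)) = D := by
    intro D hD
    rw [Finset.image_image]
    have key : ∀ Q ∈ D, (Finset.univ.filter (fun i => B i ⊆ Q)).sup B = Q := by
      intro Q hQ
      have hkey := keyQ D hD Q hQ
      apply le_antisymm
      · exact Finset.sup_le fun i hi => (Finset.mem_filter.1 hi).2
      · intro v hv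
        rw [← hkey] at hv
        obtain ⟨c, hcmem, hvc⟩ := Finset.mem_sup.1 hv
        obtain ⟨hcF, hcQ⟩ := Finset.mem_filter.1 hcmem
        obtain ⟨i, rfl⟩ := hBsurj c hcF
        exact Finset.mem_sup.2 ⟨i, Finset.mem_filter.2 ⟨Finset.mem_univ i, hcQ⟩, hvc⟩
    refine Eq.trans (Finset.image_congr (g := id) ?_) Finset.image_id
    intro Q hQ
    exact key Q hQ
  have hφψ : ∀ P, IsPartitionOfFin F.card P →
      ((P.image (fun c => c.sup B)).image
        (fun Q => Finset.univ.filter (fun i => B i ⊆ Q))) = P := by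
    intro P hP
    obtain ⟨hPne, hPdisj, hPsup⟩ := hP
    rw [Finset.image_image]
    have key : ∀ c ∈ P, Finset.univ.filter (fun i => B i ⊆ c.sup B) = c := by
      intro c hc
      ext i
      simp only [Finset.mem_filter, Finset.mem_univ, true_and]
      constructor
      · intro hsub
        obtain ⟨v, hv⟩ := hFne (B i) (hBmem i)
        obtain ⟨j, hj, hvj⟩ := Finset.mem_sup.1 (hsub hv)
        have hij : i = j := by
          by_contra hne'
          have hBij : B i ≠ B j := fun h => hne' (hBinj h)
          exact Finset.disjoint_left.1 (hFdisj (hBmem i) (hBmem j) hBij) hv hvj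
        exact hij ▸ hj
      · intro hic
        exact fun x hx => Finset.mem_sup.2 ⟨i, hic, hx⟩
    refine Eq.trans (Finset.image_congr (g := id) ?_) Finset.image_id
    intro c hc
    exact key c hc
  -- conclude
  have hInj : Set.InjOn (fun D => D.image (fun Q => Finset.univ.filter (fun i => B i ⊆ Q)))
      {D : Finset (Finset V) | IsIndependentDecompositionOf R D} := by
    intro D hD D' hD' h
    have h2 := congrArg (fun P => P.image (fun c => c.sup B)) h
    simp only at h2
    rw [hψφ D hD, hψφ D' hD'] at h2
    exact h2
  have himage : (fun D => D.image (fun Q => Finset.univ.filter (fun i => B i ⊆ Q))) ''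
      {D : Finset (Finset V) | IsIndependentDecompositionOf R D}
      = {Q : Finset (Finset (Fin F.card)) | IsPartitionOfFin F.card Q} := by
    apply Set.Subset.antisymm
    · rintro _ ⟨D, hD, rfl⟩
      exact hφmem D hD
    · intro P hP
      refine ⟨P.image (fun c => c.sup B), ?_, ?_⟩
      · exact hψmem P hP
      · exact hφψ P hP
  calc {D : Finset (Finset V) | IsIndependentDecompositionOf R D}.ncard
      = ((fun D => D.image (fun Q => Finset.univ.filter (fun i => B i ⊆ Q))) ''
          {D : Finset (Finset V) | IsIndependentDecompositionOf R D}).ncard :=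
        (Set.ncard_image_of_injOn hInj).symm
    _ = {Q : Finset (Finset (Fin F.card)) | IsPartitionOfFin F.card Q}.ncard := by
        rw [himage]
end
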